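/- Let K⁰ be a compact subset of the closed unit ball in ℝ^d, and define 𝒞 to be the collection of all compact sets K contained in some K^∞ arising as a Hausdorff limit of rescaled sets ((K⁰ − x_k)/r_k) ∩ B̄₁, where x_k ∈ ℝ^d converges and r_k ∈ (0,1] converges. Then 𝒞 contains K⁰, is closed under the rescaling operation K ↦ ((K − x)/r) ∩ B̄₁ for x ∈ B̄₁ and 0 < r ≤ 1, and is closed under Hausdorff convergence of compact sets. -/

import Mathlib

open MeasureTheory Metric Set Filter Topology
open scoped ENNReal

noncomputable section

/-- The rescaling `K ↦ ((K - x)/r) ∩ B̄₁`. -/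
def resc {d : ℕ} (K : Set (EuclideanSpace ℝ (Fin d))) (x : EuclideanSpace ℝ (Fin d))
    (r : ℝ) : Set (EuclideanSpace ℝ (Fin d)) :=
  ((fun w => r⁻¹ • (w - x)) '' K) ∩ closedBall 0 1

/-- The family `𝒞(K⁰)` of all compact sets contained in some Hausdorff limit `K^∞` of
rescalings `((K⁰ - x_k)/r_k) ∩ B̄₁` with `x_k ∈ ℝ^d` convergent and `r_k ∈ (0,1]`
convergent. -/
def blowupFamily {d : ℕ} (K0 : Set (EuclideanSpace ℝ (Fin d))) :
    Set (Set (EuclideanSpace ℝ (Fin d))) :=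
  {K | IsCompact K ∧ ∃ (Kinf : Set (EuclideanSpace ℝ (Fin d)))
    (x : ℕ → EuclideanSpace ℝ (Fin d)) (r : ℕ → ℝ)
    (x₀ : EuclideanSpace ℝ (Fin d)) (r₀ : ℝ),
      IsCompact Kinf ∧ K ⊆ Kinf ∧
      (∀ k, 0 < r k ∧ r k ≤ 1) ∧
      Tendsto x atTop (𝓝 x₀) ∧ Tendsto r atTop (𝓝 r₀) ∧
      Tendsto (fun k => EMetric.hausdorffEdist (resc K0 (x k) (r k)) Kinf) atTop (𝓝 0)}

variable {d : ℕ}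
local notation "E" => EuclideanSpace ℝ (Fin d)

open TopologicalSpace in
lemma selection (S : ℕ → Set (EuclideanSpace ℝ (Fin d)))
    (hsub : ∀ k, S k ⊆ closedBall 0 1) (hc : ∀ k, IsCompact (S k))
    (hn : ∀ k, (S k).Nonempty) :
    ∃ (T : Set (EuclideanSpace ℝ (Fin d))) (φ : ℕ → ℕ), StrictMono φ ∧ IsCompact T ∧
      Tendsto (fun j => EMetric.hausdorffEdist (S (φ j)) T) atTop (𝓝 0) := by
  set B : Set (EuclideanSpace ℝ (Fin d)) := closedBall 0 1 with hB
  haveI : CompactSpace B := isCompact_iff_compactSpace.1 (isCompact_closedBall 0 1)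
  set F : ℕ → NonemptyCompacts B := fun k =>
    ⟨⟨Subtype.val ⁻¹' S k, ((hc k).isClosed.preimage continuous_subtype_val).isCompact⟩, by
      obtain ⟨p, hp⟩ := hn k
      exact ⟨⟨p, hsub k hp⟩, hp⟩⟩ with hF
  obtain ⟨L, -, φ, hφ, hL⟩ := isCompact_univ.tendsto_subseq (x := F) (fun n => mem_univ _)
  refine ⟨Subtype.val '' (L : Set B), φ, hφ, L.isCompact.image continuous_subtype_val, ?_⟩
  have h1 : ∀ j, EMetric.hausdorffEdist (S (φ j)) (Subtype.val '' (L : Set B))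
      = edist (F (φ j)) L := by
    intro j
    have : S (φ j) = Subtype.val '' ((F (φ j) : Set B)) := by
      show S (φ j) = Subtype.val '' (Subtype.val ⁻¹' S (φ j))
      rw [Subtype.image_preimage_val]
      exact (inter_eq_right.2 (hsub _)).symm
    rw [this, EMetric.hausdorffEdist, EMetric.hausdorffEdist_image isometry_subtype_coe]
    rfl
  simp_rw [h1]
  have : Tendsto (fun j => edist (F (φ j)) L) atTop (𝓝 (edist L L)) :=
    (continuous_edist.tendsto (L, L)).comp (hL.prodMk_nhds tendsto_const_nhds)
  simpa using this

lemma near {A T : Set (EuclideanSpace ℝ (Fin d))} {w : EuclideanSpace ℝ (Fin d)}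
    (hw : w ∈ T) (h : EMetric.hausdorffEdist A T ≠ ⊤) {c : ℝ} (hc : 0 < c) :
    ∃ p ∈ A, dist w p ≤ (EMetric.hausdorffEdist A T).toReal + c := by
  have hlt : EMetric.hausdorffEdist T A
      < ENNReal.ofReal ((EMetric.hausdorffEdist A T).toReal + c) := by
    rw [EMetric.hausdorffEdist, EMetric.hausdorffEdist_comm]
    calc EMetric.hausdorffEdist A T
        = ENNReal.ofReal (EMetric.hausdorffEdist A T).toReal := by
          rw [ENNReal.ofReal_toReal h]
      _ < ENNReal.ofReal ((EMetric.hausdorffEdist A T).toReal + c) := by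
          rw [ENNReal.ofReal_lt_ofReal_iff (by positivity)]
          exact lt_add_of_pos_right _ hc
  obtain ⟨p, hp, hd⟩ := EMetric.exists_edist_lt_of_hausdorffEdist_lt hw hlt
  exact ⟨p, hp, (edist_lt_ofReal.1 hd).le⟩

lemma mem_of_approx {T : Set (EuclideanSpace ℝ (Fin d))} (hT : IsClosed T)
    {S : ℕ → Set (EuclideanSpace ℝ (Fin d))}
    (hconv : Tendsto (fun j => EMetric.hausdorffEdist (S j) T) atTop (𝓝 0))
    {z : EuclideanSpace ℝ (Fin d)} {g : ℕ → ℝ}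
    (h : ∀ᶠ j in atTop, ∃ p ∈ S j, dist p z ≤ g j) (hg : Tendsto g atTop (𝓝 0)) :
    z ∈ T := by
  have h1 : ∀ᶠ j in atTop, EMetric.infEdist z T
      ≤ ENNReal.ofReal (g j) + EMetric.hausdorffEdist (S j) T := by
    filter_upwards [h] with j ⟨p, hp, hd⟩
    calc EMetric.infEdist z T
        ≤ EMetric.infEdist z (S j) + EMetric.hausdorffEdist (S j) T :=
          EMetric.infEdist_le_infEdist_add_hausdorffEdist
      _ ≤ ENNReal.ofReal (g j) + EMetric.hausdorffEdist (S j) T := by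
          gcongr
          calc EMetric.infEdist z (S j) ≤ edist z p := EMetric.infEdist_le_edist_of_mem hp
            _ = ENNReal.ofReal (dist z p) := edist_dist _ _
            _ ≤ ENNReal.ofReal (g j) := ENNReal.ofReal_le_ofReal (by rwa [dist_comm])
  have h2 : Tendsto (fun j => ENNReal.ofReal (g j) + EMetric.hausdorffEdist (S j) T)
      atTop (𝓝 0) := by
    have : Tendsto (fun j => ENNReal.ofReal (g j)) atTop (𝓝 0) := by
      simpa [Function.comp_def] using (ENNReal.continuous_ofReal.tendsto 0).comp hg
    simpa using this.add hconv
  have : EMetric.infEdist z T ≤ 0 := ge_of_tendsto h2 h1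
  have hz : EMetric.infEdist z T = 0 := le_antisymm this zero_le
  rw [← hT.closure_eq]
  exact EMetric.mem_closure_iff_infEdist_zero.2 hz

lemma resc_isCompact {K : Set (EuclideanSpace ℝ (Fin d))} (hK : IsCompact K)
    (x : EuclideanSpace ℝ (Fin d)) (r : ℝ) : IsCompact (resc K x r) :=
  (hK.image ((continuous_id.sub continuous_const).const_smul r⁻¹)).inter_right isClosed_closedBall

lemma resc_subset_ball (K : Set (EuclideanSpace ℝ (Fin d))) (x : EuclideanSpace ℝ (Fin d))
    (r : ℝ) : resc K x r ⊆ closedBall 0 1 := inter_subset_right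

lemma resc_mono {K K' : Set (EuclideanSpace ℝ (Fin d))} (h : K ⊆ K')
    (x : EuclideanSpace ℝ (Fin d)) (r : ℝ) : resc K x r ⊆ resc K' x r :=
  inter_subset_inter_left _ (image_mono h)

lemma resc_zero_one {K : Set (EuclideanSpace ℝ (Fin d))} (h : K ⊆ closedBall 0 1) :
    resc K 0 1 = K := by
  have : (fun w : EuclideanSpace ℝ (Fin d) => (1:ℝ)⁻¹ • (w - 0)) = id := by
    funext w; simp
  rw [resc, this, image_id, inter_eq_left]
  exact h

lemma resc_comp_subset (K0 : Set (EuclideanSpace ℝ (Fin d)))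
    {y x : EuclideanSpace ℝ (Fin d)} {s r : ℝ} (hs : s ≠ 0) (hr : r ≠ 0) :
    resc (resc K0 y s) x r ⊆ resc K0 (y + s • x) (s * r) := by
  rintro z ⟨⟨v, ⟨⟨u, hu, rfl⟩, -⟩, rfl⟩, hz⟩
  refine ⟨⟨u, hu, ?_⟩, hz⟩
  dsimp only
  have h1 : u - (y + s • x) = (s * r) • (r⁻¹ • (s⁻¹ • (u - y) - x)) := by
    rw [mul_smul, smul_inv_smul₀ hr, smul_sub, smul_inv_smul₀ hs]
    abel
  rw [h1, inv_smul_smul₀ (mul_ne_zero hs hr)]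

/-- if `r k → r₀ > 0` then the limit set is inside `resc K0 x₀ r₀`. -/
lemma limit_subset_resc {K0 Kinf : Set (EuclideanSpace ℝ (Fin d))}
    (hK0 : IsCompact K0)
    {x : ℕ → EuclideanSpace ℝ (Fin d)} {r : ℕ → ℝ}
    {x₀ : EuclideanSpace ℝ (Fin d)} {r₀ : ℝ}
    (hrk : ∀ k, 0 < r k) (hx : Tendsto x atTop (𝓝 x₀)) (hr : Tendsto r atTop (𝓝 r₀))
    (hr₀ : 0 < r₀)
    (hconv : Tendsto (fun k => EMetric.hausdorffEdist (resc K0 (x k) (r k)) Kinf)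
      atTop (𝓝 0)) :
    Kinf ⊆ resc K0 x₀ r₀ := by
  intro w hw
  -- eventually the Hausdorff edistance is finite
  obtain ⟨N, hN⟩ := eventually_atTop.1
    (hconv.eventually_lt_const (by norm_num : (0:ℝ≥0∞) < 1))
  set η : ℕ → ℝ≥0∞ := fun k => EMetric.hausdorffEdist (resc K0 (x k) (r k)) Kinf with hη
  set ε : ℕ → ℝ := fun k => (η (k + N)).toReal + ((k:ℝ)+1)⁻¹ with hε
  have hεpos : ∀ k : ℕ, 0 < ((k:ℝ)+1)⁻¹ := fun k => inv_pos.2 (add_pos_of_nonneg_of_pos (Nat.cast_nonneg k) one_pos)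
  have hchoice : ∀ k, ∃ p ∈ resc K0 (x (k + N)) (r (k + N)), dist w p ≤ ε k := fun k =>
    near hw (lt_of_lt_of_le (hN (k + N) (Nat.le_add_left _ _)) le_top).ne (hεpos k)
  choose p hp hd using hchoice
  have hεto : Tendsto ε atTop (𝓝 0) := by
    have h1 : Tendsto (fun k => (η (k + N)).toReal) atTop (𝓝 0) := by
      have := (ENNReal.tendsto_toReal (by simp)).comp
        (hconv.comp (tendsto_add_atTop_nat N))
      simpa [Function.comp_def] using this
    have h2 : Tendsto (fun k : ℕ => ((k:ℝ)+1)⁻¹) atTop (𝓝 0) := by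
      simpa only [one_div] using tendsto_one_div_add_atTop_nhds_zero_nat (𝕜 := ℝ)
    simpa using h1.add h2
  have hpw : Tendsto p atTop (𝓝 w) := by
    rw [tendsto_iff_dist_tendsto_zero]
    exact squeeze_zero (fun k => dist_nonneg) (fun k => by rw [dist_comm]; exact hd k) hεto
  -- extract the K0 points
  have hpu : ∀ k, ∃ u ∈ K0, p k = (r (k + N))⁻¹ • (u - x (k + N)) := by
    intro k
    obtain ⟨⟨u, hu, he⟩, -⟩ := hp k
    exact ⟨u, hu, he.symm⟩
  choose u hu hue using hpu
  obtain ⟨uoo, huoo, φ, hφ, huφ⟩ := hK0.tendsto_subseq hu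
  have hlim : Tendsto (fun j => p (φ j)) atTop (𝓝 (r₀⁻¹ • (uoo - x₀))) := by
    have hxφ : Tendsto (fun j => x (φ j + N)) atTop (𝓝 x₀) :=
      hx.comp ((tendsto_add_atTop_nat N).comp hφ.tendsto_atTop)
    have hrφ : Tendsto (fun j => r (φ j + N)) atTop (𝓝 r₀) :=
      hr.comp ((tendsto_add_atTop_nat N).comp hφ.tendsto_atTop)
    have : Tendsto (fun j => (r (φ j + N))⁻¹ • (u (φ j) - x (φ j + N)))
        atTop (𝓝 (r₀⁻¹ • (uoo - x₀))) :=
      (hrφ.inv₀ hr₀.ne').smul (huφ.sub hxφ)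
    exact this.congr fun j => (hue (φ j)).symm
  have hweq : w = r₀⁻¹ • (uoo - x₀) :=
    tendsto_nhds_unique (hpw.comp hφ.tendsto_atTop) hlim
  have hwball : w ∈ closedBall (0 : EuclideanSpace ℝ (Fin d)) 1 :=
    isClosed_closedBall.mem_of_tendsto hpw (Eventually.of_forall fun k => (hp k).2)
  exact ⟨⟨uoo, huoo, hweq.symm⟩, hwball⟩

lemma part2_zero {K0 K Kinf : Set (EuclideanSpace ℝ (Fin d))}
    (hK0 : IsCompact K0) (hK : IsCompact K)
    {x : ℕ → EuclideanSpace ℝ (Fin d)} {r : ℕ → ℝ} {x₀ : EuclideanSpace ℝ (Fin d)}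
    (hKsub : K ⊆ Kinf) (hrk : ∀ k, 0 < r k)
    (hx : Tendsto x atTop (𝓝 x₀)) (hr0 : Tendsto r atTop (𝓝 0))
    (hconv : Tendsto (fun k => EMetric.hausdorffEdist (resc K0 (x k) (r k)) Kinf)
      atTop (𝓝 0))
    (v : EuclideanSpace ℝ (Fin d)) {ρ : ℝ} (hρ : 0 < ρ)
    (hne : (resc K v ρ).Nonempty) :
    resc K v ρ ∈ blowupFamily K0 := by
  obtain ⟨zs, hzs⟩ := hne
  set η : ℕ → ℝ≥0∞ := fun k => EMetric.hausdorffEdist (resc K0 (x k) (r k)) Kinf with hη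
  set ε : ℕ → ℝ := fun k => (η k).toReal + ((k:ℝ)+1)⁻¹ with hεdef
  have hinv : ∀ k : ℕ, 0 < ((k:ℝ)+1)⁻¹ :=
    fun k => inv_pos.2 (add_pos_of_nonneg_of_pos (Nat.cast_nonneg k) one_pos)
  have hεpos : ∀ k, 0 < ε k := fun k =>
    add_pos_of_nonneg_of_pos ENNReal.toReal_nonneg (hinv k)
  have hεto : Tendsto ε atTop (𝓝 0) := by
    have h1 : Tendsto (fun k => (η k).toReal) atTop (𝓝 0) := by
      have := (ENNReal.tendsto_toReal (by simp)).comp hconv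
      simpa [Function.comp_def] using this
    have h2 : Tendsto (fun k : ℕ => ((k:ℝ)+1)⁻¹) atTop (𝓝 0) := by
      simpa only [one_div] using tendsto_one_div_add_atTop_nhds_zero_nat (𝕜 := ℝ)
    simpa using h1.add h2
  set x' : ℕ → EuclideanSpace ℝ (Fin d) := fun k => x k + r k • v with hx'def
  set r' : ℕ → ℝ := fun k => r k * (ρ + ε k) with hr'def
  have hr'pos : ∀ k, 0 < r' k := fun k => mul_pos (hrk k) (by positivity)
  have hr'to : Tendsto r' atTop (𝓝 0) := by
    have := hr0.mul (tendsto_const_nhds.add hεto : Tendsto (fun k => ρ + ε k) atTop (𝓝 (ρ + 0)))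
    simpa using this
  have hx'to : Tendsto x' atTop (𝓝 x₀) := by
    have := hx.add (hr0.smul_const v)
    simpa using this
  have hev : ∀ᶠ k in atTop, η k < ⊤ ∧ r' k ≤ 1 :=
    (hconv.eventually_lt_const (by simp : (0:ℝ≥0∞) < ⊤)).and
      ((hr'to.eventually_lt_const one_pos).mono fun k hk => hk.le)
  obtain ⟨N, hN⟩ := eventually_atTop.1 hev
  have key : ∀ z ∈ resc K v ρ, ∀ k, N ≤ k →
      ∃ p ∈ resc K0 (x' k) (r' k), dist p z ≤ 2 * (ε k / ρ) := by
    rintro z ⟨⟨w, hw, hzeq⟩, hzb⟩ k hk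
    obtain ⟨wk, hwk, hdwk⟩ := near (hKsub hw) (hN k hk).1.ne (hinv k)
    obtain ⟨⟨u, hu, huee⟩, hwkb⟩ := hwk
    have hue : (r k)⁻¹ • (u - x k) = wk := huee
    set δ : ℝ := ε k / ρ with hδdef
    have hδpos : 0 < δ := div_pos (hεpos k) hρ
    set zk : EuclideanSpace ℝ (Fin d) := ρ⁻¹ • (wk - v) with hzkdef
    have hz : ρ⁻¹ • (w - v) = z := hzeq
    have h1 : dist zk z ≤ δ := by
      rw [dist_eq_norm, ← hz]
      have : zk - ρ⁻¹ • (w - v) = ρ⁻¹ • (wk - w) := by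
        rw [hzkdef, ← smul_sub, sub_sub_sub_cancel_right]
      rw [this, norm_smul, Real.norm_eq_abs, abs_of_pos (inv_pos.2 hρ), hδdef,
        div_eq_inv_mul]
      gcongr
      rw [← dist_eq_norm, dist_comm]
      exact hdwk
    have hzknorm : ‖zk‖ ≤ 1 + δ := by
      calc ‖zk‖ = ‖z + (zk - z)‖ := by rw [add_sub_cancel]
        _ ≤ ‖z‖ + ‖zk - z‖ := norm_add_le _ _
        _ ≤ 1 + δ := by
            gcongr
            · exact mem_closedBall_zero_iff.1 hzb
            · rw [← dist_eq_norm]; exact h1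
    have h1δpos : (0:ℝ) < 1 + δ := by positivity
    refine ⟨(1+δ)⁻¹ • zk, ⟨⟨u, hu, ?_⟩, ?_⟩, ?_⟩
    · -- p = (r' k)⁻¹ • (u - x' k)
      show (r' k)⁻¹ • (u - x' k) = (1+δ)⁻¹ • zk
      have huxk : u - x k = (r k) • wk := by
        rw [← hue, smul_inv_smul₀ (hrk k).ne']
      have hwv : wk - v = ρ • zk := by
        rw [hzkdef, smul_inv_smul₀ hρ.ne']
      have hux' : u - x' k = (r k * ρ) • zk := by
        rw [hx'def]
        calc u - (x k + r k • v) = (u - x k) - r k • v := by abel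
          _ = (r k) • wk - (r k) • v := by rw [huxk]
          _ = (r k) • (wk - v) := by rw [smul_sub]
          _ = (r k) • (ρ • zk) := by rw [hwv]
          _ = (r k * ρ) • zk := by rw [mul_smul]
      rw [hux', smul_smul]
      congr 1
      have hgen : ∀ a b c : ℝ, a ≠ 0 → 0 < b → 0 < c →
          (a * (b + c))⁻¹ * (a * b) = (1 + c / b)⁻¹ := by
        intro a b c ha hb hc
        have hbc : (0:ℝ) < b + c := by linarith
        have h1cb : (0:ℝ) < 1 + c / b := by positivity
        field_simp
      exact hgen (r k) ρ (ε k) (hrk k).ne' hρ (hεpos k)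
    · rw [mem_closedBall_zero_iff, norm_smul, Real.norm_eq_abs,
        abs_of_pos (inv_pos.2 h1δpos)]
      calc (1+δ)⁻¹ * ‖zk‖ ≤ (1+δ)⁻¹ * (1+δ) := by gcongr
        _ = 1 := inv_mul_cancel₀ h1δpos.ne'
    · calc dist ((1+δ)⁻¹ • zk) z ≤ dist ((1+δ)⁻¹ • zk) zk + dist zk z := dist_triangle _ _ _
        _ ≤ δ + δ := by
            gcongr
            · rw [dist_eq_norm]
              have : (1+δ)⁻¹ • zk - zk = ((1+δ)⁻¹ - 1) • zk := by
                rw [sub_smul, one_smul]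
              rw [this, norm_smul, Real.norm_eq_abs]
              have habs : |(1+δ)⁻¹ - 1| = δ / (1+δ) := by
                rw [abs_of_nonpos (by
                  simp only [sub_nonpos]
                  exact inv_le_one_of_one_le₀ (by linarith))]
                field_simp
                ring
              rw [habs]
              calc δ / (1+δ) * ‖zk‖ ≤ δ / (1+δ) * (1+δ) := by gcongr
                _ = δ := div_mul_cancel₀ _ h1δpos.ne'
        _ = 2 * δ := by ring
  set S : ℕ → Set (EuclideanSpace ℝ (Fin d)) := fun j => resc K0 (x' (j+N)) (r' (j+N))
    with hSdef
  have hSn : ∀ j, (S j).Nonempty := by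
    intro j
    obtain ⟨p, hp, -⟩ := key zs hzs (j+N) (Nat.le_add_left _ _)
    exact ⟨p, hp⟩
  obtain ⟨T, φ, hφ, hTc, hTconv⟩ := selection S (fun j => inter_subset_right)
    (fun j => resc_isCompact hK0 _ _) hSn
  have hshift : Tendsto (fun j => φ j + N) atTop atTop :=
    tendsto_atTop_mono (fun j => Nat.le_add_right (φ j) N) hφ.tendsto_atTop
  refine ⟨resc_isCompact hK _ _, T, fun j => x' (φ j + N), fun j => r' (φ j + N), x₀, 0,
    hTc, ?_, fun j => ⟨hr'pos _, (hN _ (Nat.le_add_left _ _)).2⟩,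
    hx'to.comp hshift, hr'to.comp hshift, hTconv⟩
  intro z hz
  refine mem_of_approx hTc.isClosed hTconv (g := fun j => 2 * (ε (φ j + N) / ρ))
    (Eventually.of_forall fun j => ?_) ?_
  · exact key z hz _ (Nat.le_add_left _ _)
  · have : Tendsto (fun j => ε (φ j + N)) atTop (𝓝 0) := hεto.comp hshift
    have h2 := (this.div_const ρ).const_mul 2
    simpa using h2

lemma part3 {K0 : Set (EuclideanSpace ℝ (Fin d))}
    (hK0 : IsCompact K0) (hK0sub : K0 ⊆ closedBall 0 1)
    (L : ℕ → Set (EuclideanSpace ℝ (Fin d))) (M : Set (EuclideanSpace ℝ (Fin d)))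
    (hL : ∀ k, L k ∈ blowupFamily K0) (hM : IsCompact M)
    (hconv : Tendsto (fun k => EMetric.hausdorffEdist (L k) M) atTop (𝓝 0)) :
    M ∈ blowupFamily K0 := by
  rcases M.eq_empty_or_nonempty with hMe | hMne
  · subst hMe
    exact ⟨isCompact_empty, K0, fun _ => 0, fun _ => 1, 0, 1, hK0, empty_subset _,
      fun k => ⟨one_pos, le_refl 1⟩, tendsto_const_nhds, tendsto_const_nhds, by
        simp only [resc_zero_one hK0sub, EMetric.hausdorffEdist, EMetric.hausdorffEdist_self]
        exact tendsto_const_nhds⟩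
  obtain ⟨z0, hz0⟩ := hMne
  have hw := fun k => (hL k).2
  choose Kinf xx rr xla rla hKinfc hLsub hrrb hxxl hrrl hcv using hw
  have hinv : ∀ k : ℕ, (0:ℝ≥0∞) < ENNReal.ofReal ((k:ℝ)+1)⁻¹ := fun k =>
    ENNReal.ofReal_pos.2 (inv_pos.2 (add_pos_of_nonneg_of_pos (Nat.cast_nonneg k) one_pos))
  have hjj : ∀ k, ∃ j, EMetric.hausdorffEdist (resc K0 (xx k j) (rr k j)) (Kinf k)
      < ENNReal.ofReal ((k:ℝ)+1)⁻¹ := fun k => ((hcv k).eventually_lt_const (hinv k)).exists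
  choose jj hjd using hjj
  set y : ℕ → EuclideanSpace ℝ (Fin d) := fun k => xx k (jj k) with hydef
  set s : ℕ → ℝ := fun k => rr k (jj k) with hsdef
  set B : ℕ → Set (EuclideanSpace ℝ (Fin d)) := fun k => resc K0 (y k) (s k) with hBdef
  -- eventually `L k` is nonempty
  obtain ⟨N, hN⟩ := eventually_atTop.1
    (hconv.eventually_lt_const (by simp : (0:ℝ≥0∞) < ⊤))
  have hLn : ∀ k, N ≤ k → (L k).Nonempty := by
    intro k hk
    refine EMetric.nonempty_of_hausdorffEdist_ne_top ⟨z0, hz0⟩ ?_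
    rw [EMetric.hausdorffEdist_comm]
    exact (hN k hk).ne
  have hBn : ∀ k, N ≤ k → (B k).Nonempty := by
    intro k hk
    refine EMetric.nonempty_of_hausdorffEdist_ne_top ((hLn k hk).mono (hLsub k)) ?_
    rw [EMetric.hausdorffEdist_comm]
    exact ((hjd k).trans_le le_top).ne
  have hy2 : ∀ k, N ≤ k → y k ∈ closedBall (0:EuclideanSpace ℝ (Fin d)) 2 := by
    intro k hk
    obtain ⟨p, ⟨u, hu, hpe⟩, hpb⟩ := hBn k hk
    have hsk := hrrb k (jj k)
    have huy : u - y k = s k • p := by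
      rw [← hpe]; rw [smul_inv_smul₀ hsk.1.ne']
    have h1 : ‖u - y k‖ ≤ 1 := by
      rw [huy, norm_smul, Real.norm_eq_abs, abs_of_pos hsk.1]
      calc s k * ‖p‖ ≤ 1 * 1 := by
            refine mul_le_mul hsk.2 (mem_closedBall_zero_iff.1 hpb) (norm_nonneg _) one_pos.le
        _ = 1 := one_mul 1
    rw [mem_closedBall_zero_iff]
    calc ‖y k‖ = ‖u - (u - y k)‖ := by rw [sub_sub_cancel]
      _ ≤ ‖u‖ + ‖u - y k‖ := norm_sub_le _ _
      _ ≤ 1 + 1 := add_le_add (mem_closedBall_zero_iff.1 (hK0sub hu)) h1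
      _ = 2 := by norm_num
  -- Bolzano–Weierstrass on the parameters
  set P : ℕ → EuclideanSpace ℝ (Fin d) × ℝ := fun i => (y (i + N), s (i + N)) with hPdef
  have hPmem : ∀ i, P i ∈ (closedBall (0:EuclideanSpace ℝ (Fin d)) 2) ×ˢ (Icc (0:ℝ) 1) := by
    intro i
    exact ⟨hy2 (i + N) (Nat.le_add_left _ _),
      ⟨(hrrb _ _).1.le, (hrrb _ _).2⟩⟩
  obtain ⟨⟨y₀, s₀⟩, -, ψ, hψ, hP⟩ :=
    ((isCompact_closedBall (0:EuclideanSpace ℝ (Fin d)) 2).prod isCompact_Icc).tendsto_subseq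
      hPmem
  have hyto : Tendsto (fun i => y (ψ i + N)) atTop (𝓝 y₀) :=
    (continuous_fst.tendsto _).comp hP
  have hsto : Tendsto (fun i => s (ψ i + N)) atTop (𝓝 s₀) :=
    (continuous_snd.tendsto _).comp hP
  -- selection
  obtain ⟨T, φ, hφ, hTc, hTconv⟩ := selection (fun i => B (ψ i + N))
    (fun i => inter_subset_right) (fun i => resc_isCompact hK0 _ _)
    (fun i => hBn _ (Nat.le_add_left _ _))
  set θ : ℕ → ℕ := fun i => ψ (φ i) + N with hθdef
  have hθ : Tendsto θ atTop atTop :=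
    tendsto_atTop_mono (fun i => Nat.le_add_right _ _)
      ((hψ.comp hφ).tendsto_atTop)
  refine ⟨hM, T, fun i => y (θ i), fun i => s (θ i), y₀, s₀, hTc, ?_,
    fun i => hrrb _ _, hyto.comp hφ.tendsto_atTop, hsto.comp hφ.tendsto_atTop, hTconv⟩
  -- M ⊆ T
  intro z hz
  have hb : ∀ i, EMetric.infEdist z T ≤ EMetric.hausdorffEdist M (L (θ i))
      + ENNReal.ofReal ((θ i : ℝ)+1)⁻¹ + EMetric.hausdorffEdist (B (θ i)) T := by
    intro i
    calc EMetric.infEdist z T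
        ≤ EMetric.infEdist z (B (θ i)) + EMetric.hausdorffEdist (B (θ i)) T :=
          EMetric.infEdist_le_infEdist_add_hausdorffEdist
      _ ≤ (EMetric.infEdist z (Kinf (θ i)) + EMetric.hausdorffEdist (Kinf (θ i)) (B (θ i)))
          + EMetric.hausdorffEdist (B (θ i)) T := by
          gcongr
          exact EMetric.infEdist_le_infEdist_add_hausdorffEdist
      _ ≤ (EMetric.hausdorffEdist M (L (θ i)) + ENNReal.ofReal ((θ i : ℝ)+1)⁻¹)
          + EMetric.hausdorffEdist (B (θ i)) T := by
          gcongr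
          · calc EMetric.infEdist z (Kinf (θ i))
                ≤ EMetric.infEdist z (L (θ i)) := EMetric.infEdist_anti (hLsub _)
              _ ≤ EMetric.hausdorffEdist M (L (θ i)) :=
                  EMetric.infEdist_le_hausdorffEdist_of_mem hz
          · rw [EMetric.hausdorffEdist, EMetric.hausdorffEdist_comm]
            exact (hjd _).le
  have hrhs : Tendsto (fun i => EMetric.hausdorffEdist M (L (θ i))
      + ENNReal.ofReal ((θ i : ℝ)+1)⁻¹ + EMetric.hausdorffEdist (B (θ i)) T)
      atTop (𝓝 0) := by
    have h1 : Tendsto (fun i => EMetric.hausdorffEdist M (L (θ i))) atTop (𝓝 0) :=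
      (hconv.comp hθ).congr fun i => by simp only [Function.comp]; rw [EMetric.hausdorffEdist, EMetric.hausdorffEdist_comm]
    have h2 : Tendsto (fun i => ENNReal.ofReal ((θ i : ℝ)+1)⁻¹) atTop (𝓝 0) := by
      have hr : Tendsto (fun k : ℕ => ((k:ℝ)+1)⁻¹) atTop (𝓝 0) := by
        simpa only [one_div] using tendsto_one_div_add_atTop_nhds_zero_nat (𝕜 := ℝ)
      have := (ENNReal.continuous_ofReal.tendsto 0).comp (hr.comp hθ)
      simpa [Function.comp_def] using this
    simpa using (h1.add h2).add hTconv
  have hle : EMetric.infEdist z T ≤ 0 := ge_of_tendsto hrhs (Eventually.of_forall hb)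
  have : EMetric.infEdist z T = 0 := le_antisymm hle zero_le
  rw [← hTc.isClosed.closure_eq]
  exact EMetric.mem_closure_iff_infEdist_zero.2 this

/-- The family `𝒞(K⁰)` generated by blow-ups of a compact set `K⁰ ⊆ B̄₁` contains `K⁰`,
is closed under the rescalings `K ↦ ((K - x)/r) ∩ B̄₁` with `x ∈ B̄₁`, `0 < r ≤ 1`, and is
closed under Hausdorff convergence of compact sets. -/
theorem blowupFamily_closed (d : ℕ) (K0 : Set (EuclideanSpace ℝ (Fin d)))
    (hK0 : IsCompact K0) (hK0sub : K0 ⊆ closedBall 0 1) :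
    K0 ∈ blowupFamily K0 ∧
    (∀ K ∈ blowupFamily K0, ∀ x ∈ closedBall (0 : EuclideanSpace ℝ (Fin d)) 1,
      ∀ r : ℝ, 0 < r → r ≤ 1 → resc K x r ∈ blowupFamily K0) ∧
    (∀ (L : ℕ → Set (EuclideanSpace ℝ (Fin d))) (M : Set (EuclideanSpace ℝ (Fin d))),
      (∀ k, L k ∈ blowupFamily K0) → IsCompact M →
      Tendsto (fun k => EMetric.hausdorffEdist (L k) M) atTop (𝓝 0) →
      M ∈ blowupFamily K0) := by
  refine ⟨?_, ?_, ?_⟩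
  · exact ⟨hK0, K0, fun _ => 0, fun _ => 1, 0, 1, hK0, subset_rfl,
      fun k => ⟨one_pos, le_refl 1⟩, tendsto_const_nhds, tendsto_const_nhds, by
        simp only [resc_zero_one hK0sub, EMetric.hausdorffEdist, EMetric.hausdorffEdist_self]
        exact tendsto_const_nhds⟩
  · intro K hKmem v hv ρ hρ hρ1
    obtain ⟨hKc, Kinf, x, r, x₀, r₀, hKinfc, hKsub, hrb, hx, hr, hconv⟩ := hKmem
    rcases (resc K v ρ).eq_empty_or_nonempty with hE | hne
    · exact ⟨resc_isCompact hKc _ _, Kinf, x, r, x₀, r₀, hKinfc,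
        by rw [hE]; exact empty_subset _, hrb, hx, hr, hconv⟩
    · have h0 : 0 ≤ r₀ := ge_of_tendsto hr (Eventually.of_forall fun k => (hrb k).1.le)
      rcases h0.eq_or_lt with h00 | hpos
      · exact part2_zero hK0 hKc hKsub (fun k => (hrb k).1) hx (h00 ▸ hr) hconv v hρ hne
      · have hKinfsub : Kinf ⊆ resc K0 x₀ r₀ :=
          limit_subset_resc hK0 (fun k => (hrb k).1) hx hr hpos hconv
        have hr₀1 : r₀ ≤ 1 := le_of_tendsto hr (Eventually.of_forall fun k => (hrb k).2)
        refine ⟨resc_isCompact hKc _ _, resc K0 (x₀ + r₀ • v) (r₀ * ρ),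
          fun _ => x₀ + r₀ • v, fun _ => r₀ * ρ, x₀ + r₀ • v, r₀ * ρ,
          resc_isCompact hK0 _ _, ?_,
          fun k => ⟨mul_pos hpos hρ, mul_le_one₀ hr₀1 hρ.le hρ1⟩,
          tendsto_const_nhds, tendsto_const_nhds, by
            simp only [EMetric.hausdorffEdist, EMetric.hausdorffEdist_self]
            exact tendsto_const_nhds⟩
        calc resc K v ρ ⊆ resc Kinf v ρ := resc_mono hKsub _ _
          _ ⊆ resc (resc K0 x₀ r₀) v ρ := resc_mono hKinfsub _ _
          _ ⊆ resc K0 (x₀ + r₀ • v) (r₀ * ρ) := resc_comp_subset K0 hpos.ne' hρ.ne'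
  · exact fun L M hL hM hc => part3 hK0 hK0sub L M hL hM hc
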